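/- arXiv:1811.05379 — 3 statements merged into one kernel-verified Lean document; each statement's English description precedes it below -/
import Mathlib

section
/- Let X₁, X₂, … be i.i.d. with distribution function F and let X_(n) = max_{1≤i≤n} X_i. For a constant τ ≥ 0 and a real sequence (u_n), one has n(1 − F(u_n)) → τ if and only if P(X_(n) ≤ u_n) → e^{−τ}. -/
open MeasureTheory Filter ProbabilityTheory

/-- The ratio `-log(1-x)/x`, extended by `1` at `x = 0`. -/
noncomputable def logRatio (x : ℝ) : ℝ := if x = 0 then 1 else -Real.log (1 - x) / x

lemma tendsto_logRatio : Tendsto logRatio (nhds 0) (nhds 1) := by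
  rw [← nhdsNE_sup_pure (0 : ℝ), tendsto_sup]
  constructor
  · have hderiv : Tendsto (slope Real.log 1) (nhdsWithin 1 {(1:ℝ)}ᶜ) (nhds 1) := by
      have := (Real.hasDerivAt_log one_ne_zero)
      rw [hasDerivAt_iff_tendsto_slope] at this
      simpa using this
    have hmap : Tendsto (fun x : ℝ => 1 - x) (nhdsWithin 0 {(0:ℝ)}ᶜ) (nhdsWithin 1 {(1:ℝ)}ᶜ) := by
      rw [tendsto_nhdsWithin_iff]
      refine ⟨?_, ?_⟩
      · have hc : Continuous (fun x : ℝ => 1 - x) := by continuity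
        have h := hc.tendsto 0
        simp only [sub_zero] at h
        exact h.mono_left nhdsWithin_le_nhds
      · filter_upwards [self_mem_nhdsWithin] with x hx
        have hx0 : x ≠ 0 := hx
        simp only [Set.mem_compl_iff, Set.mem_singleton_iff]
        intro hcon
        apply hx0
        linarith
    have := hderiv.comp hmap
    refine this.congr' ?_
    filter_upwards [self_mem_nhdsWithin] with x hx
    have hx0 : x ≠ 0 := hx
    simp only [Function.comp, slope_def_field, logRatio, if_neg hx0, Real.log_one]
    rw [sub_zero, show (1:ℝ) - x - 1 = -x from by ring, div_neg, neg_div]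
  · have : logRatio 0 = 1 := by simp [logRatio]
    rw [← this]
    exact tendsto_pure_nhds _ _

lemma key_identity (a : ℝ) (n : ℕ) :
    (n : ℝ) * Real.log a = -(((n : ℝ) * (1 - a)) * logRatio (1 - a)) := by
  by_cases h : (1 : ℝ) - a = 0
  · have : a = 1 := by linarith
    simp [this, h]
  · rw [logRatio, if_neg h]
    have : (1 : ℝ) - (1 - a) = a := by ring
    field_simp [this]
    ring

lemma aux_main (a : ℕ → ℝ) (h0 : ∀ n, 0 ≤ a n) (h1 : ∀ n, a n ≤ 1) (τ : ℝ) :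
    Tendsto (fun n : ℕ => (n : ℝ) * (1 - a n)) atTop (nhds τ)
    ↔ Tendsto (fun n : ℕ => a n ^ n) atTop (nhds (Real.exp (-τ))) := by
  constructor
  · intro h
    have ha1 : Tendsto a atTop (nhds 1) := by
      have h2 : Tendsto (fun n : ℕ => ((n : ℝ) * (1 - a n)) * ((n : ℝ))⁻¹) atTop (nhds (τ * 0)) :=
        h.mul tendsto_inv_atTop_nhds_zero_nat
      rw [mul_zero] at h2
      have h3 : Tendsto (fun n : ℕ => 1 - a n) atTop (nhds 0) := by
        refine h2.congr' ?_
        filter_upwards [eventually_ge_atTop 1] with n hn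
        have : (n : ℝ) ≠ 0 := Nat.cast_ne_zero.mpr (by omega)
        field_simp
      have := tendsto_const_nhds (x := (1:ℝ)) (f := atTop (α := ℕ)) |>.sub h3
      simpa using this
    have hr : Tendsto (fun n => logRatio (1 - a n)) atTop (nhds 1) := by
      apply tendsto_logRatio.comp
      have := tendsto_const_nhds (x := (1:ℝ)) (f := atTop (α := ℕ)) |>.sub ha1
      simpa using this
    have hlog : Tendsto (fun n : ℕ => (n : ℝ) * Real.log (a n)) atTop (nhds (-τ)) := by
      have := (h.mul hr).neg
      rw [mul_one] at this
      refine this.congr fun n => (key_identity (a n) n).symm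
    have hexp := (Real.continuous_exp.continuousAt (x := -τ)).tendsto.comp hlog
    refine hexp.congr' ?_
    filter_upwards [ha1.eventually (eventually_gt_nhds (by norm_num : (0:ℝ) < 1))] with n hn
    simp only [Function.comp]
    rw [← Real.log_pow, Real.exp_log (pow_pos hn n)]
  · intro h
    have hc : (0 : ℝ) < Real.exp (-τ) / 2 := by positivity
    have hev : ∀ᶠ n : ℕ in atTop, Real.exp (-τ) / 2 < a n ^ n :=
      h.eventually (eventually_gt_nhds (by linarith [Real.exp_pos (-τ)]))
    have ha1 : Tendsto a atTop (nhds 1) := by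
      have hlow : Tendsto (fun n : ℕ => (Real.exp (-τ) / 2) ^ ((n : ℝ))⁻¹) atTop (nhds 1) := by
        have hcont : ContinuousAt (fun x : ℝ => (Real.exp (-τ) / 2) ^ x) 0 :=
          Real.continuousAt_const_rpow hc.ne'
        have := hcont.tendsto.comp tendsto_inv_atTop_nhds_zero_nat
        simpa [Real.rpow_zero, Function.comp_def] using this
      refine tendsto_of_tendsto_of_tendsto_of_le_of_le' hlow tendsto_const_nhds ?_
        (Eventually.of_forall h1)
      filter_upwards [hev, eventually_ge_atTop 1] with n hn hn1
      calc (Real.exp (-τ) / 2) ^ ((n : ℝ))⁻¹ ≤ (a n ^ n) ^ ((n : ℝ))⁻¹ :=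
            Real.rpow_le_rpow hc.le hn.le (by positivity)
        _ = a n := Real.pow_rpow_inv_natCast (h0 n) (by omega)
    have hr : Tendsto (fun n => logRatio (1 - a n)) atTop (nhds 1) := by
      apply tendsto_logRatio.comp
      have := tendsto_const_nhds (x := (1:ℝ)) (f := atTop (α := ℕ)) |>.sub ha1
      simpa using this
    have hlog : Tendsto (fun n : ℕ => (n : ℝ) * Real.log (a n)) atTop (nhds (-τ)) := by
      have hcont : ContinuousAt Real.log (Real.exp (-τ)) :=
        Real.continuousAt_log (Real.exp_pos _).ne'
      have := hcont.tendsto.comp h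
      rw [Real.log_exp] at this
      refine this.congr fun n => ?_
      simp [Function.comp, Real.log_pow]
    have := (hlog.neg.div hr one_ne_zero)
    rw [neg_neg, div_one] at this
    refine this.congr' ?_
    filter_upwards [hr.eventually (eventually_gt_nhds (by norm_num : (1:ℝ)/2 < 1))] with n hn
    simp only [Pi.div_apply]
    rw [key_identity (a n) n, neg_neg, mul_div_assoc, div_self (ne_of_gt (by linarith)), mul_one]

/-- For i.i.d. random variables `X i` with distribution function `F` and
`X_(n) = max_{i < n} X i`, for `τ ≥ 0` and a real sequence `u`, one has
`n (1 − F (u n)) → τ` iff `P(X_(n) ≤ u n) → exp (−τ)`. -/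
theorem max_iid_tendsto_exp_iff
    {Ω : Type*} [MeasurableSpace Ω] (μ : Measure Ω) [IsProbabilityMeasure μ]
    (X : ℕ → Ω → ℝ) (hmeas : ∀ i, Measurable (X i))
    (hindep : iIndepFun X μ)
    (hident : ∀ i, IdentDistrib (X i) (X 0) μ μ)
    (F : ℝ → ℝ) (hF : ∀ x, F x = (μ {ω | X 0 ω ≤ x}).toReal)
    (τ : ℝ) (hτ : 0 ≤ τ) (u : ℕ → ℝ) :
    Tendsto (fun n : ℕ => (n : ℝ) * (1 - F (u n))) atTop (nhds τ)
    ↔ Tendsto (fun n : ℕ => (μ {ω | ∀ i ∈ Finset.range n, X i ω ≤ u n}).toReal)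
        atTop (nhds (Real.exp (-τ))) := by
  have hprob : ∀ n : ℕ, (μ {ω | ∀ i ∈ Finset.range n, X i ω ≤ u n}).toReal = F (u n) ^ n := by
    intro n
    have hset : {ω | ∀ i ∈ Finset.range n, X i ω ≤ u n}
        = ⋂ i ∈ Finset.range n, X i ⁻¹' Set.Iic (u n) := by
      ext ω; simp [Set.mem_iInter]
    have hmeasure : μ {ω | ∀ i ∈ Finset.range n, X i ω ≤ u n}
        = ∏ i ∈ Finset.range n, μ (X i ⁻¹' Set.Iic (u n)) := by
      rw [hset]
      exact hindep.meas_biInter fun i _ => ⟨Set.Iic (u n), measurableSet_Iic, rfl⟩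
    have hident' : ∀ i, μ (X i ⁻¹' Set.Iic (u n)) = μ {ω | X 0 ω ≤ u n} := fun i =>
      (hident i).measure_mem_eq measurableSet_Iic
    rw [hmeasure]
    simp_rw [hident']
    rw [Finset.prod_const, Finset.card_range, ENNReal.toReal_pow, hF]
  rw [tendsto_congr hprob]
  exact aux_main (fun n => F (u n))
    (fun n => by simp only [hF]; exact ENNReal.toReal_nonneg)
    (fun n => by
      simp only [hF]
      exact le_trans (ENNReal.toReal_mono ENNReal.one_ne_top prob_le_one) (by simp)) τ
end

section
/- Let X = (1, X₂)^T with X₂ ∈ (0,1) and Y = U³/3 − X₂(U−1)² for U ~ Uniform(0,1) independent of X₂. Then the conditional quantile function is Q_x(τ) = τ³/3 − (τ−1)² x₂, which is linear in x = (1, x₂), the minimizer of τ ↦ Q_x'(τ) over (0,1) is τ_x = x₂, and the conditional mode is m(x) = −2x₂³/3 + 2x₂² − x₂, which is a nonlinear function of x₂. -/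
open MeasureTheory

lemma mono_aux (x₂ u v : ℝ) (hx : 0 < x₂) (hx1 : x₂ < 1)
    (hu : 0 ≤ u) (hv : v ≤ 1) (huv : u < v) :
    u ^ 3 / 3 - x₂ * (u - 1) ^ 2 < v ^ 3 / 3 - x₂ * (v - 1) ^ 2 := by
  nlinarith [mul_pos (sub_pos.2 huv) hx, sq_nonneg (u + v), sq_nonneg u, sq_nonneg v,
    mul_pos (mul_pos (sub_pos.2 huv) hx) (sub_pos.2 (show u + v < 2 by linarith))]

/-- For `x₂ ∈ (0,1)` and `Y = U³/3 − x₂ (U−1)²` with `U ~ Uniform(0,1)`: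
the conditional quantile function is `Q τ = τ³/3 − (τ−1)² x₂` (linear in `(1,x₂)`),
the sparsity `Q'(τ) = τ² − 2(τ−1)x₂` is uniquely minimized over `(0,1)` at `τ = x₂`,
and the conditional mode `m = Q(x₂) = −2x₂³/3 + 2x₂² − x₂` is nonlinear in `x₂`. -/
theorem quantile_mode_example
    (x₂ : ℝ) (hx : x₂ ∈ Set.Ioo (0 : ℝ) 1) :
    -- Q is the quantile function of Y under the uniform distribution on (0,1):
    (∀ τ ∈ Set.Ioo (0 : ℝ) 1,
      (volume.restrict (Set.Ioo (0 : ℝ) 1))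
          {u | u ^ 3 / 3 - x₂ * (u - 1) ^ 2 ≤ τ ^ 3 / 3 - (τ - 1) ^ 2 * x₂}
        = ENNReal.ofReal τ) ∧
    -- the sparsity is the derivative of Q:
    (∀ τ : ℝ, HasDerivAt (fun t : ℝ => t ^ 3 / 3 - (t - 1) ^ 2 * x₂)
      (τ ^ 2 - 2 * (τ - 1) * x₂) τ) ∧
    -- the sparsity is uniquely minimized on (0,1) at τ = x₂:
    (∀ τ ∈ Set.Ioo (0 : ℝ) 1, τ ≠ x₂ →
      x₂ ^ 2 - 2 * (x₂ - 1) * x₂ < τ ^ 2 - 2 * (τ - 1) * x₂) ∧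
    -- the mode value:
    (x₂ ^ 3 / 3 - (x₂ - 1) ^ 2 * x₂ = -2 * x₂ ^ 3 / 3 + 2 * x₂ ^ 2 - x₂) ∧
    -- the modal function is nonlinear in x₂:
    ¬ ∃ a b : ℝ, ∀ y ∈ Set.Ioo (0 : ℝ) 1,
        -2 * y ^ 3 / 3 + 2 * y ^ 2 - y = a + b * y := by
  obtain ⟨hx0, hx1⟩ := hx
  refine ⟨?_, ?_, ?_, by ring, ?_⟩
  · intro τ ⟨hτ0, hτ1⟩
    rw [Measure.restrict_apply' measurableSet_Ioo]
    have hset : {u : ℝ | u ^ 3 / 3 - x₂ * (u - 1) ^ 2 ≤ τ ^ 3 / 3 - (τ - 1) ^ 2 * x₂} ∩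
        Set.Ioo (0 : ℝ) 1 = Set.Ioc 0 τ := by
      ext u
      simp only [Set.mem_inter_iff, Set.mem_setOf_eq, Set.mem_Ioo, Set.mem_Ioc]
      constructor
      · rintro ⟨hle, hu0, hu1⟩
        refine ⟨hu0, ?_⟩
        by_contra h
        push_neg at h
        have := mono_aux x₂ τ u hx0 hx1 hτ0.le hu1.le h
        linarith [this]
      · rintro ⟨hu0, huτ⟩
        refine ⟨?_, hu0, lt_of_le_of_lt huτ hτ1⟩
        rcases eq_or_lt_of_le huτ with rfl | h
        · linarith
        · have := mono_aux x₂ u τ hx0 hx1 hu0.le hτ1.le h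
          linarith
    rw [hset, Real.volume_Ioc]
    norm_num
  · intro τ
    have h1 : HasDerivAt (fun t : ℝ => t ^ 3 / 3) (τ ^ 2) τ := by
      have := (hasDerivAt_pow 3 τ).div_const 3
      simpa using this
    have h2 : HasDerivAt (fun t : ℝ => (t - 1) ^ 2 * x₂) (2 * (τ - 1) * x₂) τ := by
      have : HasDerivAt (fun t : ℝ => (t - 1) ^ 2) (2 * (τ - 1)) τ := by
        have := ((hasDerivAt_id τ).sub_const 1).fun_pow 2
        simpa using this
      simpa using this.mul_const x₂
    simpa using h1.fun_sub h2
  · rintro τ ⟨hτ0, hτ1⟩ hne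
    have : (τ - x₂) ^ 2 > 0 := (sq_nonneg _).lt_of_ne (Ne.symm (pow_ne_zero 2 (sub_ne_zero.2 hne)))
    nlinarith
  · rintro ⟨a, b, h⟩
    have h1 := h (1/4) (by norm_num)
    have h2 := h (1/2) (by norm_num)
    have h3 := h (3/4) (by norm_num)
    norm_num at h1 h2 h3
    linarith
end

section
/- Let F_Z be a distribution function satisfying 1 − F_Z(z) ~ (λ/z) e^{−(2/3)z³ − κz} as z → ∞ for constants λ, κ > 0, and let Z₁, …, Z_n be i.i.d. with distribution F_Z, Z_(n) = max_i Z_i. With a_n = 3(2/3)^{1/3}(log n)^{2/3} and b_n = (3/2 · log n)^{1/3} − a_n^{-1}[κ(3/2 · log n)^{1/3} + (1/3)log log n + (1/3)log(3/2) − log λ], one has P(a_n(Z_(n) − b_n) ≤ z) → exp(−e^{−z}) for every z ∈ ℝ. -/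
set_option maxHeartbeats 1000000
open MeasureTheory Filter ProbabilityTheory

private lemma aux_pow_tendsto_exp {s : ℕ → ℝ} {c : ℝ} (hc : 0 < c)
    (h01 : ∀ n, 0 ≤ s n ∧ s n ≤ 1)
    (h : Tendsto (fun n : ℕ => (n : ℝ) * s n) atTop (nhds c)) :
    Tendsto (fun n : ℕ => (1 - s n) ^ n) atTop (nhds (Real.exp (-c))) := by
  have hs0 : Tendsto s atTop (nhds 0) := by
    have hn : Tendsto (fun n : ℕ => ((n : ℝ))⁻¹) atTop (nhds 0) :=
      tendsto_natCast_atTop_atTop.inv_tendsto_atTop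
    have := h.mul hn
    rw [mul_zero] at this
    refine this.congr' ?_
    filter_upwards [eventually_ge_atTop 1] with n hn1
    have : (n : ℝ) ≠ 0 := by positivity
    field_simp
  have hspos : ∀ᶠ n : ℕ in atTop, 0 < s n := by
    have h2 : ∀ᶠ n : ℕ in atTop, c / 2 < (n : ℝ) * s n :=
      h.eventually (eventually_gt_nhds (by linarith))
    filter_upwards [h2] with n hn
    by_contra hle
    push_neg at hle
    have : (n : ℝ) * s n ≤ 0 := mul_nonpos_of_nonneg_of_nonpos (Nat.cast_nonneg n) hle
    nlinarith
  have hslt1 : ∀ᶠ n : ℕ in atTop, s n < 1 :=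
    hs0.eventually (eventually_lt_nhds one_pos)
  -- slope of log at 1
  have hslope : Tendsto (slope Real.log 1) (nhdsWithin 1 {(1:ℝ)}ᶜ) (nhds 1) := by
    have := hasDerivAt_iff_tendsto_slope.mp (Real.hasDerivAt_log one_ne_zero)
    simpa using this
  have hcomp : Tendsto (fun n : ℕ => 1 - s n) atTop (nhdsWithin 1 {(1:ℝ)}ᶜ) := by
    rw [tendsto_nhdsWithin_iff]
    constructor
    · have := (tendsto_const_nhds (x := (1:ℝ)) (f := atTop (α := ℕ))).sub hs0
      simpa using this
    · filter_upwards [hspos] with n hn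
      simp only [Set.mem_compl_iff, Set.mem_singleton_iff]
      intro habs
      have : s n = 0 := by linarith [sub_eq_self.mp habs]
      exact absurd this (ne_of_gt hn)
  have hlogratio : Tendsto (fun n : ℕ => Real.log (1 - s n) / (- s n)) atTop (nhds 1) := by
    have := hslope.comp hcomp
    refine this.congr fun n => ?_
    rw [Function.comp_apply, slope_def_field, Real.log_one, sub_zero]
    congr 1
    ring
  have hnlog : Tendsto (fun n : ℕ => (n : ℝ) * Real.log (1 - s n)) atTop (nhds (-c)) := by
    have := (h.mul hlogratio).neg
    rw [mul_one] at this
    refine this.congr' ?_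
    filter_upwards [hspos] with n hn
    have hsne : s n ≠ 0 := ne_of_gt hn
    field_simp
  have := (Real.continuous_exp.tendsto _).comp hnlog
  refine this.congr' ?_
  filter_upwards [hspos, hslt1] with n h1 h2
  have hpos : 0 < 1 - s n := by linarith
  simp only [Function.comp_apply]
  rw [Real.exp_nat_mul, Real.exp_log hpos]


private lemma aux_key (lam κ z : ℝ) (hlam : 0 < lam) (hκ : 0 < κ)
    (a b : ℕ → ℝ)
    (hA : ∀ n : ℕ, a n = 3 * ((2 : ℝ) / 3) ^ ((1 : ℝ) / 3) * (Real.log n) ^ ((2 : ℝ) / 3))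
    (hB : ∀ n : ℕ, b n = ((3 : ℝ) / 2 * Real.log n) ^ ((1 : ℝ) / 3)
      - (1 / a n) * (κ * ((3 : ℝ) / 2 * Real.log n) ^ ((1 : ℝ) / 3)
          + (1 / 3) * Real.log (Real.log n) + (1 / 3) * Real.log ((3 : ℝ) / 2)
          - Real.log lam)) :
    Tendsto (fun n : ℕ => b n + z / a n) atTop atTop ∧
    Tendsto (fun n : ℕ => (n : ℝ) * ((lam / (b n + z / a n)) *
        Real.exp (-(2 / 3) * (b n + z / a n) ^ 3 - κ * (b n + z / a n))))
      atTop (nhds (Real.exp (-z))) := by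
  let L : ℕ → ℝ := fun n => Real.log n
  let t : ℕ → ℝ := fun n => ((3 : ℝ) / 2 * L n) ^ ((1 : ℝ) / 3)
  let u : ℕ → ℝ := fun n => b n + z / a n
  let X : ℕ → ℝ := fun n =>
    z - κ * t n - (1 / 3) * Real.log (L n) - (1 / 3) * Real.log ((3 : ℝ) / 2)
      + Real.log lam
  let d : ℕ → ℝ := fun n => X n / (2 * t n ^ 2)
  have hLe : ∀ n, L n = Real.log n := fun n => rfl
  have hte : ∀ n, t n = ((3 : ℝ) / 2 * L n) ^ ((1 : ℝ) / 3) := fun n => rfl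
  have hue : ∀ n, u n = b n + z / a n := fun n => rfl
  have hXe : ∀ n, X n = z - κ * t n - (1 / 3) * Real.log (L n)
      - (1 / 3) * Real.log ((3 : ℝ) / 2) + Real.log lam := fun n => rfl
  have hde : ∀ n, d n = X n / (2 * t n ^ 2) := fun n => rfl
  -- basic limits
  have hLtop : Tendsto L atTop atTop :=
    Real.tendsto_log_atTop.comp tendsto_natCast_atTop_atTop
  have hwtop : Tendsto (fun n => (3 : ℝ) / 2 * L n) atTop atTop :=
    hLtop.const_mul_atTop (by norm_num)
  have httop : Tendsto t atTop atTop :=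
    (tendsto_rpow_atTop (by norm_num : (0:ℝ) < 1/3)).comp hwtop
  have hL1 : ∀ᶠ n : ℕ in atTop, 1 ≤ L n := hLtop.eventually_ge_atTop 1
  have ht1 : ∀ᶠ n : ℕ in atTop, 1 ≤ t n := httop.eventually_ge_atTop 1
  -- the constant c = (3/2)^(1/3)
  set c : ℝ := ((3 : ℝ) / 2) ^ ((1 : ℝ) / 3) with hcdef
  have hcpos : 0 < c := Real.rpow_pos_of_pos (by norm_num) _
  have hc3 : c ^ 3 = 3 / 2 := by
    rw [hcdef, ← Real.rpow_natCast (((3:ℝ)/2) ^ ((1:ℝ)/3)) 3, ← Real.rpow_mul (by norm_num)]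
    norm_num
  -- t n as c * L n ^ (1/3)
  have htc : ∀ n : ℕ, 0 ≤ L n → t n = c * L n ^ ((1:ℝ)/3) := by
    intro n hL
    rw [hte, Real.mul_rpow (by norm_num) hL]
  -- a n = 2 t n ^ 2 when L n ≥ 0
  have hA2 : ∀ n : ℕ, 0 ≤ L n → a n = 2 * t n ^ 2 := by
    intro n hL
    have ht2 : t n ^ 2 = c ^ 2 * L n ^ ((2:ℝ)/3) := by
      rw [htc n hL, mul_pow, ← Real.rpow_natCast (L n ^ ((1:ℝ)/3)) 2,
        ← Real.rpow_mul hL]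
      norm_num
    have h23 : ((2:ℝ)/3) ^ ((1:ℝ)/3) = c⁻¹ := by
      rw [hcdef, ← Real.rpow_neg_one (((3:ℝ)/2) ^ ((1:ℝ)/3)), ← Real.rpow_mul (by norm_num),
        show ((2:ℝ)/3) = ((3:ℝ)/2)⁻¹ by norm_num, ← Real.rpow_neg_one ((3:ℝ)/2),
        ← Real.rpow_mul (by norm_num)]
      norm_num
    rw [hA, ht2, h23, ← hLe]
    have h3c : (3 : ℝ) * c⁻¹ = 2 * c ^ 2 := by
      field_simp
      nlinarith [hc3]
    nlinarith [h3c, Real.rpow_nonneg hL ((2:ℝ)/3)]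
  -- t n ^ 3 = 3/2 * L n
  have ht3 : ∀ n : ℕ, 0 ≤ L n → t n ^ 3 = 3 / 2 * L n := by
    intro n hL
    rw [hte, ← Real.rpow_natCast (((3:ℝ)/2 * L n) ^ ((1:ℝ)/3)) 3,
      ← Real.rpow_mul (by positivity)]
    norm_num
  -- u n = t n + d n eventually
  have hud : ∀ᶠ n : ℕ in atTop, u n = t n + d n := by
    filter_upwards [hL1, ht1] with n hL ht
    have htpos : (0:ℝ) < t n := by linarith
    have ha : a n = 2 * t n ^ 2 := hA2 n (by linarith)
    have hane : a n ≠ 0 := by rw [ha]; positivity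
    rw [hue, hde, hXe, hB n, ← hLe, ← hte, ← ha]
    field_simp
    ring
  -- limit of t * d
  have hinvt : Tendsto (fun n => (t n)⁻¹) atTop (nhds 0) := httop.inv_tendsto_atTop
  have hlogLt : Tendsto (fun n => Real.log (L n) / t n) atTop (nhds 0) := by
    have hlittle : Tendsto (fun x : ℝ => Real.log x / x ^ ((1:ℝ)/3)) atTop (nhds 0) :=
      (isLittleO_log_rpow_atTop (by norm_num : (0:ℝ) < 1/3)).tendsto_div_nhds_zero
    have hcomp := hlittle.comp hwtop
    have h2 : Tendsto (fun n : ℕ => Real.log ((3:ℝ)/2 * L n) / t n) atTop (nhds 0) := by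
      refine hcomp.congr fun n => ?_
      simp only [Function.comp_apply, hte]
    have h3 : Tendsto (fun n : ℕ => Real.log ((3:ℝ)/2) * (t n)⁻¹) atTop (nhds 0) := by
      simpa using hinvt.const_mul (Real.log ((3:ℝ)/2))
    have := h2.sub h3
    rw [sub_zero] at this
    refine this.congr' ?_
    filter_upwards [hL1, ht1] with n hL ht
    rw [Real.log_mul (by norm_num) (by linarith)]
    field_simp
    ring
  have htd : Tendsto (fun n => t n * d n) atTop (nhds (-(κ/2))) := by
    have hbase : Tendsto (fun n : ℕ =>
        (z - (1/3) * Real.log ((3:ℝ)/2) + Real.log lam) * (t n)⁻¹ / 2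
          - κ / 2 - (1/6) * (Real.log (L n) / t n)) atTop (nhds (-(κ/2))) := by
      have h1 := (hinvt.const_mul (z - (1/3) * Real.log ((3:ℝ)/2) + Real.log lam)).div_const 2
      have h2 := hlogLt.const_mul (1/6 : ℝ)
      have := (h1.sub (tendsto_const_nhds (x := κ/2))).sub h2
      simpa using this
    refine hbase.congr' ?_
    filter_upwards [ht1] with n ht
    have htpos : (0:ℝ) < t n := by linarith
    rw [hde, hXe]
    field_simp
    ring
  have hd0 : Tendsto d atTop (nhds 0) := by
    have := htd.mul hinvt
    rw [mul_zero] at this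
    refine this.congr' ?_
    filter_upwards [ht1] with n ht
    have htpos : (0:ℝ) < t n := by linarith
    field_simp
  have hutop : Tendsto u atTop atTop :=
    Tendsto.congr' (hud.mono fun n h => h.symm) (httop.atTop_add hd0)
  refine ⟨hutop, ?_⟩
  let E : ℕ → ℝ := fun n => 2 * (t n * d n ^ 2) + 2 / 3 * d n ^ 3 + κ * d n
  have hEe : ∀ n, E n = 2 * (t n * d n ^ 2) + 2 / 3 * d n ^ 3 + κ * d n := fun n => rfl
  have htd2 : Tendsto (fun n => t n * d n ^ 2) atTop (nhds 0) := by
    have := htd.mul hd0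
    rw [mul_zero] at this
    exact this.congr fun n => by ring
  have hE0 : Tendsto E atTop (nhds 0) := by
    have hd3 : Tendsto (fun n => d n ^ 3) atTop (nhds 0) := by
      have := (hd0.pow 3); simpa using this
    have := ((htd2.const_mul 2).add (hd3.const_mul (2/3))).add (hd0.const_mul κ)
    simpa using this
  have hexpE : Tendsto (fun n => Real.exp (-E n)) atTop (nhds 1) := by
    have h0 : Tendsto (fun n => -E n) atTop (nhds 0) := by simpa using hE0.neg
    have := (Real.continuous_exp.tendsto 0).comp h0
    rw [Real.exp_zero] at this; exact this
  have hupos : ∀ᶠ n : ℕ in atTop, 0 < u n := hutop.eventually_gt_atTop 0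
  have htu : Tendsto (fun n => t n / u n) atTop (nhds 1) := by
    have h1 : Tendsto (fun n => 1 + d n * (t n)⁻¹) atTop (nhds 1) := by
      have := (hd0.mul hinvt).const_add 1
      simpa using this
    have h2 := h1.inv₀ one_ne_zero
    rw [inv_one] at h2
    refine h2.congr' ?_
    filter_upwards [ht1, hupos, hud] with n ht hu hude
    have htpos : (0:ℝ) < t n := by linarith
    rw [hude] at hu ⊢
    rw [eq_div_iff (by positivity)]
    field_simp
  have hmain : Tendsto (fun n => Real.exp (-z) * (t n / u n) * Real.exp (-E n))
      atTop (nhds (Real.exp (-z))) := by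
    have := (htu.const_mul (Real.exp (-z))).mul hexpE
    simpa using this
  refine hmain.congr' ?_
  filter_upwards [hL1, ht1, hupos, hud, eventually_ge_atTop 1] with n hL ht hu hude hn1
  have hnpos : (0:ℝ) < n := by exact_mod_cast Nat.lt_of_lt_of_le Nat.zero_lt_one hn1
  have htpos : (0:ℝ) < t n := by linarith
  have hLpos : (0:ℝ) < L n := by linarith
  have hwpos : (0:ℝ) < 3 / 2 * L n := by linarith
  have hX2 : 2 * t n ^ 2 * d n = z - κ * t n - 1 / 3 * Real.log (L n)
      - 1 / 3 * Real.log ((3:ℝ)/2) + Real.log lam := by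
    rw [hde, hXe]
    field_simp
  have ht3n : t n ^ 3 = 3 / 2 * L n := ht3 n hLpos.le
  have hAeq : -(2 / 3) * u n ^ 3 - κ * u n
      = -L n + -z + -Real.log lam + -E n + Real.log (3 / 2 * L n) * (1 / 3) := by
    rw [hude, hEe]
    rw [Real.log_mul (by norm_num) (ne_of_gt hLpos)]
    linear_combination (-(2:ℝ)/3) * ht3n - hX2
  have hexpA : Real.exp (-(2 / 3) * u n ^ 3 - κ * u n)
      = (n:ℝ)⁻¹ * Real.exp (-z) * lam⁻¹ * Real.exp (-E n) * t n := by
    rw [hAeq, Real.exp_add, Real.exp_add, Real.exp_add, Real.exp_add]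
    have e1 : Real.exp (-L n) = (n:ℝ)⁻¹ := by
      rw [Real.exp_neg, hLe, Real.exp_log hnpos]
    have e2 : Real.exp (-Real.log lam) = lam⁻¹ := by
      rw [Real.exp_neg, Real.exp_log hlam]
    have e3 : Real.exp (Real.log (3 / 2 * L n) * (1 / 3)) = t n := by
      rw [hte, Real.rpow_def_of_pos hwpos]
    rw [e1, e2, e3]
  have heq : (n:ℝ) * (lam / u n * Real.exp (-(2 / 3) * u n ^ 3 - κ * u n))
      = Real.exp (-z) * (t n / u n) * Real.exp (-E n) := by
    rw [hexpA]
    field_simp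
  exact heq.symm


/-- Gumbel limit for the maximum of i.i.d. random variables with Chernoff-type tail
`1 − F(z) ~ (λ/z) e^{−(2/3)z³ − κz}`: with the norming constants
`aₙ = 3(2/3)^{1/3}(log n)^{2/3}` and
`bₙ = (3/2 log n)^{1/3} − aₙ⁻¹[κ(3/2 log n)^{1/3} + (1/3)log log n + (1/3)log(3/2) − log λ]`,
`P(aₙ(Z_(n) − bₙ) ≤ z) → exp(−e^{−z})` for every `z`. -/
theorem gumbel_limit_chernoff_tail
    {Ω : Type*} [MeasurableSpace Ω] (μ : Measure Ω) [IsProbabilityMeasure μ]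
    (Z : ℕ → Ω → ℝ) (hmeas : ∀ i, Measurable (Z i))
    (hindep : iIndepFun Z μ)
    (hident : ∀ i, IdentDistrib (Z i) (Z 0) μ μ)
    (F : ℝ → ℝ) (hF : ∀ z, F z = (μ {ω | Z 0 ω ≤ z}).toReal)
    (lam κ : ℝ) (hlam : 0 < lam) (hκ : 0 < κ)
    (htail : Tendsto
      (fun z : ℝ => (1 - F z) / ((lam / z) * Real.exp (-(2 / 3) * z ^ 3 - κ * z)))
      atTop (nhds 1))
    (a b : ℕ → ℝ)
    (hA : ∀ n : ℕ, a n = 3 * ((2 : ℝ) / 3) ^ ((1 : ℝ) / 3) * (Real.log n) ^ ((2 : ℝ) / 3))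
    (hB : ∀ n : ℕ, b n = ((3 : ℝ) / 2 * Real.log n) ^ ((1 : ℝ) / 3)
      - (1 / a n) * (κ * ((3 : ℝ) / 2 * Real.log n) ^ ((1 : ℝ) / 3)
          + (1 / 3) * Real.log (Real.log n) + (1 / 3) * Real.log ((3 : ℝ) / 2)
          - Real.log lam)) :
    ∀ z : ℝ,
      Tendsto
        (fun n : ℕ =>
          (μ {ω | a n * ((⨆ i ∈ Finset.range n, Z i ω) - b n) ≤ z}).toReal)
        atTop (nhds (Real.exp (-Real.exp (-z)))) := by
  intro z
  obtain ⟨hutop, hngu⟩ := aux_key lam κ z hlam hκ a b hA hB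
  let u : ℕ → ℝ := fun n => b n + z / a n
  have hue : ∀ n, u n = b n + z / a n := fun n => rfl
  -- F is in [0,1]
  have hF01 : ∀ x : ℝ, 0 ≤ F x ∧ F x ≤ 1 := by
    intro x
    rw [hF]
    refine ⟨ENNReal.toReal_nonneg, ?_⟩
    have h1 : μ {ω | Z 0 ω ≤ x} ≤ 1 := prob_le_one
    calc (μ {ω | Z 0 ω ≤ x}).toReal ≤ (1 : ENNReal).toReal :=
          ENNReal.toReal_mono ENNReal.one_ne_top h1
      _ = 1 := by simp
  have hupos : ∀ᶠ n : ℕ in atTop, 0 < u n := hutop.eventually_gt_atTop 0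
  -- n (1 - F(u n)) → exp (-z)
  have hratio : Tendsto
      (fun n : ℕ => (1 - F (u n)) /
        ((lam / u n) * Real.exp (-(2 / 3) * (u n) ^ 3 - κ * (u n))))
      atTop (nhds 1) := htail.comp hutop
  have hns : Tendsto (fun n : ℕ => (n : ℝ) * (1 - F (u n))) atTop
      (nhds (Real.exp (-z))) := by
    have hmul := hngu.mul hratio
    rw [mul_one] at hmul
    refine hmul.congr' ?_
    filter_upwards [hupos] with n hu
    have hgpos : 0 < (lam / u n) * Real.exp (-(2 / 3) * (u n) ^ 3 - κ * (u n)) := by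
      positivity
    simp only [← hue]
    field_simp
  -- F(u n)^n → exp(-exp(-z))
  have hpow : Tendsto (fun n : ℕ => F (u n) ^ n) atTop
      (nhds (Real.exp (-Real.exp (-z)))) := by
    have h01 : ∀ n : ℕ, 0 ≤ 1 - F (u n) ∧ 1 - F (u n) ≤ 1 := by
      intro n
      obtain ⟨h1, h2⟩ := hF01 (u n)
      constructor <;> linarith
    have := aux_pow_tendsto_exp (Real.exp_pos (-z)) h01 hns
    refine this.congr fun n => ?_
    norm_num
  -- identify the probability with F(u n)^n
  refine Tendsto.congr' ?_ hpow
  have hapos : ∀ᶠ n : ℕ in atTop, 0 < a n := by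
    have hLtop : Tendsto (fun n : ℕ => Real.log n) atTop atTop :=
      Real.tendsto_log_atTop.comp tendsto_natCast_atTop_atTop
    filter_upwards [hLtop.eventually_gt_atTop 0] with n hL
    rw [hA]
    have h1 : (0:ℝ) < ((2 : ℝ) / 3) ^ ((1 : ℝ) / 3) := Real.rpow_pos_of_pos (by norm_num) _
    have h2 : (0:ℝ) < (Real.log n) ^ ((2 : ℝ) / 3) := Real.rpow_pos_of_pos hL _
    positivity
  filter_upwards [hapos, hupos, eventually_ge_atTop 1] with n ha hu hn1
  -- set equality
  have hset : {ω | a n * ((⨆ i ∈ Finset.range n, Z i ω) - b n) ≤ z}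
      = ⋂ i ∈ Finset.range n, {ω | Z i ω ≤ u n} := by
    ext ω
    simp only [Set.mem_setOf_eq, Set.mem_iInter]
    have hstep : a n * ((⨆ i ∈ Finset.range n, Z i ω) - b n) ≤ z
        ↔ (⨆ i ∈ Finset.range n, Z i ω) ≤ u n := by
      rw [hue]
      constructor
      · intro h
        have := (le_div_iff₀' ha).mpr h
        linarith
      · intro h
        have : (⨆ i ∈ Finset.range n, Z i ω) - b n ≤ z / a n := by linarith
        calc a n * ((⨆ i ∈ Finset.range n, Z i ω) - b n) ≤ a n * (z / a n) :=
              mul_le_mul_of_nonneg_left this ha.le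
          _ = z := by field_simp
    rw [hstep]
    -- sup over finite range
    set g : ℕ → ℝ := fun i => ⨆ _ : i ∈ Finset.range n, Z i ω with hgdef
    have hg0 : ∀ j, j ∉ Finset.range n → g j = 0 := by
      intro j hj
      have : IsEmpty (j ∈ Finset.range n) := ⟨hj⟩
      exact Real.iSup_of_isEmpty _
    have hgval : ∀ i (hi : i ∈ Finset.range n), g i = Z i ω := fun i hi => ciSup_pos hi
    have hbdd : BddAbove (Set.range g) := by
      have hsub : Set.range g ⊆ g '' Set.Iic n := by
        rintro x ⟨i, rfl⟩
        by_cases hi : i ≤ n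
        · exact ⟨i, hi, rfl⟩
        · refine ⟨n, le_refl n, ?_⟩
          rw [hg0 n (by simp), hg0 i (by simp; omega)]
      exact (((Set.finite_Iic n).image g).subset hsub).bddAbove
    constructor
    · intro h i hi
      calc Z i ω = g i := (hgval i hi).symm
        _ ≤ ⨆ j, g j := le_ciSup hbdd i
        _ ≤ u n := h
    · intro h
      refine ciSup_le fun i => ?_
      by_cases hi : i ∈ Finset.range n
      · rw [hgval i hi]; exact h i hi
      · rw [hg0 i hi]; linarith
  rw [hset]
  have hInter : μ (⋂ i ∈ Finset.range n, {ω | Z i ω ≤ u n})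
      = ∏ i ∈ Finset.range n, μ {ω | Z i ω ≤ u n} :=
    hindep.meas_biInter (fun i _ => ⟨Set.Iic (u n), measurableSet_Iic, rfl⟩)
  have hprod : ∏ i ∈ Finset.range n, μ {ω | Z i ω ≤ u n}
      = (μ {ω | Z 0 ω ≤ u n}) ^ n := by
    have hone : ∀ i, μ {ω | Z i ω ≤ u n} = μ {ω | Z 0 ω ≤ u n} := fun i =>
      (hident i).measure_mem_eq (measurableSet_Iic (a := u n))
    rw [Finset.prod_congr rfl fun i _ => hone i, Finset.prod_const, Finset.card_range]
  rw [hInter, hprod, ENNReal.toReal_pow, ← hF]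
end
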